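/- Let Z_n(P,Q) denote the polynomial counting lattice paths of length 2n with steps ±1, starting and ending at height 0 and staying nonnegative, where each down-step immediately following an up-step has weight Q and each down-step immediately following a down-step has weight P. Then the generating function Z(z) = Σ_{n≥0} Z_n z^n satisfies the quadratic equation z·P·Z(z)^2 - (1 - z(Q-P))·Z(z) + 1 = 0. -/

import Mathlib

open PowerSeries

/-- step value: `true` is an up-step `+1`, `false` a down-step `-1`. -/
def stepVal (b : Bool) : ℤ := if b then 1 else -1

/-- total height change of a step sequence. -/
def pathSum (s : List Bool) : ℤ := (s.map stepVal).sum

/-- a Dyck-type path: total sum 0, all partial sums nonnegative. -/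
def IsDyck (s : List Bool) : Prop :=
  pathSum s = 0 ∧ ∀ k ∈ Finset.range (s.length + 1), 0 ≤ pathSum (s.take k)

instance : DecidablePred IsDyck := fun s => by
  unfold IsDyck; infer_instance

/-- weight of a consecutive pair of steps: a down-step following an up-step has
weight `Q`, a down-step following a down-step has weight `P`, up-steps weight `1`. -/
def pairWeight {R : Type*} [CommRing R] (P Q : R) : Bool → Bool → R
  | _, true => 1
  | true, false => Q
  | false, false => P

/-- weight of a path: product of the weights of its down-steps
(the first step of a Dyck path is never a down-step). -/
def pathWeight {R : Type*} [CommRing R] (P Q : R) (s : List Bool) : R :=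
  ((s.zip s.tail).map (fun p => pairWeight P Q p.1 p.2)).prod

/-- `Z_n(P,Q)`: sum of weights over Dyck-type paths of length `2n`. -/
def Zn {R : Type*} [CommRing R] (P Q : R) (n : ℕ) : R :=
  ∑ f ∈ Finset.univ.filter (fun f : Fin (2 * n) → Bool => IsDyck (List.ofFn f)),
    pathWeight P Q (List.ofFn f)

section Lemmas
variable {R : Type*} [CommRing R] (P Q : R)

lemma pathSum_append (a b : List Bool) : pathSum (a ++ b) = pathSum a + pathSum b := by
  simp [pathSum]

lemma pathSum_cons (x : Bool) (s : List Bool) :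
    pathSum (x :: s) = stepVal x + pathSum s := by simp [pathSum]

lemma isDyck_iff (s : List Bool) :
    IsDyck s ↔ pathSum s = 0 ∧ ∀ k, 0 ≤ pathSum (s.take k) := by
  constructor
  · rintro ⟨h0, h⟩
    refine ⟨h0, fun k => ?_⟩
    rcases le_or_gt k s.length with hk | hk
    · exact h k (Finset.mem_range.mpr (by omega))
    · rw [List.take_of_length_le (by omega)]; exact h0.ge
  · rintro ⟨h0, h⟩; exact ⟨h0, fun k _ => h k⟩

lemma even_pathSum_add_length (s : List Bool) : Even (pathSum s + s.length) := by
  induction s with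
  | nil => simp [pathSum]
  | cons x t ih =>
    rw [pathSum_cons]
    have : stepVal x + pathSum t + (x :: t).length
        = (stepVal x + 1) + (pathSum t + t.length) := by simp [List.length_cons]; push_cast; ring
    rw [this]
    refine Even.add ?_ ih
    rcases x with _ | _ <;> simp [stepVal] <;> decide

lemma even_length_of_isDyck {s : List Bool} (h : IsDyck s) : Even s.length := by
  have := even_pathSum_add_length s
  rw [h.1, zero_add] at this
  rwa [Int.even_coe_nat] at this

end Lemmas

section Weight
variable {R : Type*} [CommRing R] (P Q : R)

/-- accumulate weight given previous step. -/
def wAux (P Q : R) : Bool → List Bool → R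
  | _, [] => 1
  | p, b :: t => pairWeight P Q p b * wAux P Q b t

/-- last of `p :: s`. -/
def last' : Bool → List Bool → Bool
  | p, [] => p
  | _, b :: t => last' b t

lemma pathWeight_cons (a : Bool) (s : List Bool) :
    pathWeight P Q (a :: s) = wAux P Q a s := by
  induction s generalizing a with
  | nil => simp [pathWeight, wAux]
  | cons b t ih =>
    rw [wAux, ← ih b]
    simp [pathWeight]

lemma wAux_append (p : Bool) (u v : List Bool) :
    wAux P Q p (u ++ v) = wAux P Q p u * wAux P Q (last' p u) v := by
  induction u generalizing p with
  | nil => simp [wAux, last']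
  | cons b t ih => rw [List.cons_append, wAux, ih, wAux, last', mul_assoc]

lemma last'_cons_getLast (b : Bool) (t : List Bool) :
    last' b t = (b :: t).getLast (by simp) := by
  induction t generalizing b with
  | nil => simp [last']
  | cons c t' ih =>
    show last' c t' = _
    rw [ih c]
    exact (List.getLast_cons (by simp)).symm

/-- first step of a nonempty Dyck path is up. -/
lemma head_true_of_isDyck {a : Bool} {s : List Bool} (h : IsDyck (a :: s)) : a = true := by
  have := h.2 1 (Finset.mem_range.mpr (by simp))
  simp [pathSum, stepVal] at this
  rcases a with _ | _ <;> simp_all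

/-- last step of a nonempty Dyck path is down. -/
lemma getLast_false_of_isDyck {s : List Bool} (h : IsDyck s) (hne : s ≠ []) :
    s.getLast hne = false := by
  have h1 := (isDyck_iff s).mp h
  have htake : 0 ≤ pathSum s.dropLast := by
    rw [List.dropLast_eq_take]; exact h1.2 _
  have hs : s = s.dropLast ++ [s.getLast hne] := (List.dropLast_append_getLast hne).symm
  have h0 := h1.1
  rw [hs, pathSum_append] at h0
  rcases hlast : s.getLast hne with _ | _
  · rfl
  · rw [hlast] at h0
    have h2 : pathSum [true] = 1 := by simp [pathSum, stepVal]
    rw [h2] at h0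
    omega

lemma pathWeight_decomp {A B : List Bool} (hA : IsDyck A) (hB : IsDyck B) :
    pathWeight P Q (true :: A ++ false :: B)
      = (if A = [] then Q else P) * (pathWeight P Q A * pathWeight P Q B) := by
  have hBw : wAux P Q false B = pathWeight P Q B := by
    rcases B with _ | ⟨b, t⟩
    · simp [wAux, pathWeight]
    · have hb := head_true_of_isDyck hB
      subst hb
      rw [wAux, pathWeight_cons]
      simp [pairWeight]
  rcases A with _ | ⟨a, t⟩
  · simp only [List.cons_append, List.nil_append, if_pos rfl]
    rw [pathWeight_cons, wAux, hBw]
    simp [pairWeight, pathWeight]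
  · have ha := head_true_of_isDyck hA
    subst ha
    have hlast : last' true t = false := by
      rw [last'_cons_getLast]
      exact getLast_false_of_isDyck hA (by simp)
    simp only [List.cons_append]
    rw [pathWeight_cons, wAux, wAux_append, hlast, wAux, hBw, ← pathWeight_cons]
    simp only [if_neg (by simp : ¬(true :: t = []))]
    simp [pairWeight]
    ring
end Weight

section Decomp

lemma pathSum_take_ge {s : List Bool} (h : IsDyck s) (k : ℕ) : 0 ≤ pathSum (s.take k) :=
  ((isDyck_iff s).mp h).2 k

lemma isDyck_nil : IsDyck ([] : List Bool) := by
  constructor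
  · simp [pathSum]
  · intro k _; simp [pathSum]

lemma pathSum_cons_take (a : Bool) (t : List Bool) (k : ℕ) :
    pathSum ((a :: t).take (k+1)) = stepVal a + pathSum (t.take k) := by
  rw [List.take_succ_cons, pathSum_cons]

lemma isDyck_comp {A B : List Bool} (hA : IsDyck A) (hB : IsDyck B) :
    IsDyck (true :: A ++ false :: B) := by
  rw [isDyck_iff]
  constructor
  · rw [List.cons_append, pathSum_cons, pathSum_append, pathSum_cons, hA.1, hB.1]
    simp [stepVal]
  · intro k
    rcases k with _ | j
    · simp [pathSum]
    · rw [List.cons_append, pathSum_cons_take, List.take_append,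
        pathSum_append]
      have h1 : 0 ≤ pathSum (A.take j) := pathSum_take_ge hA j
      have h2 : -1 ≤ pathSum ((false :: B).take (j - A.length)) := by
        rcases hm : j - A.length with _ | i
        · simp [pathSum]
        · rw [pathSum_cons_take]
          have := pathSum_take_ge hB i
          simp [stepVal]
          omega
      simp [stepVal]
      omega

lemma decomp_ne {A A' B B' : List Bool} (hA' : IsDyck A') (hA0 : pathSum A = 0)
    (hlt : A.length < A'.length) (h : A ++ false :: B = A' ++ false :: B') : False := by
  have h1 : 0 ≤ pathSum (A'.take (A.length + 1)) := pathSum_take_ge hA' _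
  have h2 : A'.take (A.length + 1) = (A' ++ false :: B').take (A.length + 1) :=
    (List.take_append_of_le_length (by omega)).symm
  have h3 : (A ++ false :: B).take (A.length + 1) = A ++ [false] := by
    rw [List.take_append, List.take_of_length_le (by omega)]
    have hsub : A.length + 1 - A.length = 1 := by omega
    rw [hsub, List.take_succ_cons, List.take_zero]
  rw [h2, ← h, h3, pathSum_append, hA0] at h1
  simp [pathSum, stepVal] at h1

lemma decomp_inj {A A' B B' : List Bool} (hA : IsDyck A) (hA' : IsDyck A')
    (h : (true :: A ++ false :: B) = (true :: A' ++ false :: B')) : A = A' ∧ B = B' := by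
  rw [List.cons_append, List.cons_append, List.cons_inj_right] at h
  have hlen : A.length = A'.length := by
    rcases lt_trichotomy A.length A'.length with hl | hl | hl
    · exact absurd (decomp_ne hA' hA.1 hl h) (by simp)
    · exact hl
    · exact absurd (decomp_ne hA hA'.1 hl h.symm) (by simp)
  obtain ⟨h1, h2⟩ := List.append_inj h hlen
  exact ⟨h1, by simpa using h2⟩

lemma decomp_exists {s : List Bool} (h : IsDyck s) (hne : s ≠ []) :
    ∃ A B, IsDyck A ∧ IsDyck B ∧ s = true :: A ++ false :: B := by
  rcases s with _ | ⟨a, t⟩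
  · exact absurd rfl hne
  have ha := head_true_of_isDyck h
  subst ha
  have hts : pathSum t = -1 := by
    have := h.1; rw [pathSum_cons] at this; simp [stepVal] at this; omega
  have htm : ∀ m, -1 ≤ pathSum (t.take m) := by
    intro m
    have := pathSum_take_ge h (m+1)
    rw [pathSum_cons_take] at this
    simp [stepVal] at this
    omega
  have htne : t ≠ [] := by
    intro he; rw [he] at hts; simp [pathSum] at hts
  have hex : ∃ j, pathSum (t.take (j+1)) = -1 := by
    refine ⟨t.length - 1, ?_⟩
    rw [List.take_of_length_le (by have := List.length_pos_iff.mpr htne; omega)]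
    exact hts
  classical
  let j0 := Nat.find hex
  have hj0 : pathSum (t.take (j0+1)) = -1 := Nat.find_spec hex
  have hpre : ∀ k, k ≤ j0 → 0 ≤ pathSum (t.take k) := by
    intro k hk
    rcases k with _ | i
    · simp [pathSum]
    · have : pathSum (t.take (i+1)) ≠ -1 := Nat.find_min hex (by omega)
      have := htm (i+1)
      omega
  have hj0len : j0 < t.length := by
    by_contra hc
    push_neg at hc
    have h0 := hpre j0 le_rfl
    rw [List.take_of_length_le (by omega)] at h0
    rw [List.take_of_length_le (by omega)] at hj0
    omega
  have hsplit : t.take (j0+1) = t.take j0 ++ [t.get ⟨j0, hj0len⟩] := by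
    rw [List.take_succ, List.getElem?_eq_getElem hj0len]
    rfl
  have hsum : pathSum (t.take j0) + stepVal (t.get ⟨j0, hj0len⟩) = -1 := by
    rw [← hj0, hsplit, pathSum_append]
    simp [pathSum]
  have hget : t.get ⟨j0, hj0len⟩ = false := by
    have h0 := hpre j0 le_rfl
    rcases hg : t.get ⟨j0, hj0len⟩ with _ | _
    · rfl
    · rw [hg] at hsum; simp [stepVal] at hsum; omega
  have htake0 : pathSum (t.take j0) = 0 := by
    rw [hget] at hsum; simp [stepVal] at hsum; omega
  refine ⟨t.take j0, t.drop (j0+1), ?_, ?_, ?_⟩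
  · rw [isDyck_iff]
    refine ⟨htake0, fun k => ?_⟩
    rw [List.take_take]
    exact hpre _ (min_le_right k j0)
  · rw [isDyck_iff]
    constructor
    · have : pathSum t = pathSum (t.take (j0+1)) + pathSum (t.drop (j0+1)) := by
        rw [← pathSum_append, List.take_append_drop]
      omega
    · intro k
      have hTK : t.take (j0+1+k) = t.take (j0+1) ++ (t.drop (j0+1)).take k := List.take_add
      have := htm (j0+1+k)
      rw [hTK, pathSum_append, hj0] at this
      omega
  · rw [List.cons_append, List.cons_inj_right]
    conv_lhs => rw [← List.take_append_drop j0 t]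
    congr 1
    have hget' : t[j0] = false := hget
    rw [List.drop_eq_getElem_cons hj0len, hget']

end Decomp

section Sums
open Finset
variable {R : Type*} [CommRing R] (P Q : R)

/-- Dyck paths of length `m` as a finset of lists. -/
def DF (m : ℕ) : Finset (List Bool) :=
  ((Finset.univ : Finset (Fin m → Bool)).image List.ofFn).filter IsDyck

lemma mem_DF {m : ℕ} {s : List Bool} : s ∈ DF m ↔ s.length = m ∧ IsDyck s := by
  simp only [DF, Finset.mem_filter, Finset.mem_image, Finset.mem_univ, true_and]
  constructor
  · rintro ⟨⟨f, rfl⟩, h⟩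
    exact ⟨List.length_ofFn, h⟩
  · rintro ⟨rfl, h⟩
    exact ⟨⟨fun i => s.get i, List.ofFn_get s⟩, h⟩

/-- weighted count over Dyck paths of length `m`. -/
def ZL (P Q : R) (m : ℕ) : R := ∑ s ∈ DF m, pathWeight P Q s

lemma Zn_eq_ZL (n : ℕ) : Zn P Q n = ZL P Q (2 * n) := by
  rw [Zn, ZL, DF, Finset.filter_image,
    Finset.sum_image (fun f _ g _ h => List.ofFn_injective h)]

lemma DF_zero : DF 0 = {[]} := by
  ext s
  rw [mem_DF, Finset.mem_singleton]
  constructor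
  · rintro ⟨h, -⟩; exact List.length_eq_zero_iff.mp h
  · rintro rfl; exact ⟨rfl, isDyck_nil⟩

lemma ZL_zero : ZL P Q 0 = 1 := by
  rw [ZL, DF_zero, Finset.sum_singleton]
  simp [pathWeight]

lemma ZL_odd (m : ℕ) (hm : ¬ Even m) : ZL P Q m = 0 := by
  rw [ZL, Finset.sum_eq_zero]
  intro s hs
  rw [mem_DF] at hs
  exact absurd (hs.1 ▸ even_length_of_isDyck hs.2) hm

/-- the first-return decomposition identity. -/
lemma ZL_rec (m : ℕ) :
    ZL P Q (m + 2) = ∑ ab ∈ Finset.HasAntidiagonal.antidiagonal m, ∑ A ∈ DF ab.1, ∑ B ∈ DF ab.2,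
      (if A = [] then Q else P) * (pathWeight P Q A * pathWeight P Q B) := by
  classical
  have hss : ∑ x ∈ (Finset.HasAntidiagonal.antidiagonal m).sigma (fun ab => (DF ab.1) ×ˢ (DF ab.2)),
      (if x.2.1 = [] then Q else P) * (pathWeight P Q x.2.1 * pathWeight P Q x.2.2)
      = ∑ ab ∈ Finset.HasAntidiagonal.antidiagonal m, ∑ A ∈ DF ab.1, ∑ B ∈ DF ab.2,
        (if A = [] then Q else P) * (pathWeight P Q A * pathWeight P Q B) := by
    rw [Finset.sum_sigma]
    exact Finset.sum_congr rfl fun ab _ => by rw [Finset.sum_product]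
  rw [← hss, ZL]
  refine (Finset.sum_bij (fun x _ => true :: x.2.1 ++ false :: x.2.2) ?_ ?_ ?_ ?_).symm
  · rintro ⟨⟨a, b⟩, A, B⟩ hx
    rw [Finset.mem_sigma, Finset.HasAntidiagonal.mem_antidiagonal, Finset.mem_product, mem_DF, mem_DF] at hx
    rw [mem_DF]
    dsimp only at hx ⊢
    refine ⟨?_, isDyck_comp hx.2.1.2 hx.2.2.2⟩
    simp only [List.length_cons, List.length_append, List.length_cons]
    omega
  · rintro ⟨⟨a, b⟩, A, B⟩ hx ⟨⟨a', b'⟩, A', B'⟩ hy hxy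
    rw [Finset.mem_sigma, Finset.HasAntidiagonal.mem_antidiagonal, Finset.mem_product, mem_DF, mem_DF] at hx hy
    obtain ⟨hAA, hBB⟩ := decomp_inj hx.2.1.2 hy.2.1.2 hxy
    subst hAA; subst hBB
    dsimp only at hx hy
    have ha : a = a' := by rw [← hx.2.1.1, ← hy.2.1.1]
    have hb : b = b' := by rw [← hx.2.2.1, ← hy.2.2.1]
    subst ha; subst hb; rfl
  · intro s hs
    rw [mem_DF] at hs
    obtain ⟨A, B, hA, hB, rfl⟩ := decomp_exists hs.2 (by
      intro he; rw [he] at hs; simp at hs)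
    refine ⟨⟨⟨A.length, B.length⟩, A, B⟩, ?_, rfl⟩
    rw [Finset.mem_sigma, Finset.HasAntidiagonal.mem_antidiagonal, Finset.mem_product, mem_DF, mem_DF]
    dsimp only
    have hlen := hs.1
    simp only [List.length_cons, List.length_append, List.length_cons] at hlen
    exact ⟨by omega, ⟨rfl, hA⟩, rfl, hB⟩
  · rintro ⟨⟨a, b⟩, A, B⟩ hx
    rw [Finset.mem_sigma, Finset.HasAntidiagonal.mem_antidiagonal, Finset.mem_product, mem_DF, mem_DF] at hx
    exact (pathWeight_decomp P Q hx.2.1.2 hx.2.2.2).symm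

end Sums

section Final
open Finset PowerSeries
variable {R : Type*} [CommRing R] (P Q : R)

lemma ZL_rec2 (m : ℕ) :
    ZL P Q (m + 2) = (Q - P) * ZL P Q m
      + P * ∑ ab ∈ Finset.HasAntidiagonal.antidiagonal m, ZL P Q ab.1 * ZL P Q ab.2 := by
  classical
  rw [ZL_rec]
  have hinner : ∀ ab : ℕ × ℕ,
      (∑ A ∈ DF ab.1, ∑ B ∈ DF ab.2,
        (if A = [] then Q else P) * (pathWeight P Q A * pathWeight P Q B))
      = P * (ZL P Q ab.1 * ZL P Q ab.2)
        + (if ab.1 = 0 then (Q - P) * ZL P Q ab.2 else 0) := by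
    intro ab
    have hsplit : ∀ A ∈ DF ab.1, (∑ B ∈ DF ab.2,
        (if A = [] then Q else P) * (pathWeight P Q A * pathWeight P Q B))
        = P * (pathWeight P Q A * ZL P Q ab.2)
          + (if A = [] then (Q - P) * (pathWeight P Q A * ZL P Q ab.2) else 0) := by
      intro A _
      rw [← Finset.mul_sum, ← Finset.mul_sum, ZL]
      split_ifs with hA
      · ring
      · ring
    rw [Finset.sum_congr rfl hsplit, Finset.sum_add_distrib]
    congr 1
    · simp only [ZL, ← Finset.mul_sum, ← Finset.sum_mul]
      try ring
    · rw [Finset.sum_ite_eq' (DF ab.1) ([] : List Bool)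
        (fun A => (Q - P) * (pathWeight P Q A * ZL P Q ab.2))]
      have hmem : ([] : List Bool) ∈ DF ab.1 ↔ ab.1 = 0 := by
        rw [mem_DF]
        constructor
        · rintro ⟨h, -⟩; exact h.symm
        · rintro h; exact ⟨h.symm, isDyck_nil⟩
      by_cases h0 : ab.1 = 0
      · rw [if_pos (hmem.mpr h0), if_pos h0]
        simp [pathWeight]
      · rw [if_neg (fun hc => h0 (hmem.mp hc)), if_neg h0]
  rw [Finset.sum_congr rfl (fun ab _ => hinner ab), Finset.sum_add_distrib, ← Finset.mul_sum]
  have hlast : ∑ x ∈ Finset.HasAntidiagonal.antidiagonal m, (if x.1 = 0 then (Q - P) * ZL P Q x.2 else 0)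
      = (Q - P) * ZL P Q m := by
    rw [Finset.sum_eq_single ((0, m) : ℕ × ℕ)]
    · simp
    · rintro ⟨a, b⟩ hab hne
      rw [Finset.HasAntidiagonal.mem_antidiagonal] at hab
      dsimp only
      rw [if_neg]
      intro h0
      exact hne (Prod.ext h0 (by omega))
    · intro h
      exact absurd (Finset.HasAntidiagonal.mem_antidiagonal.mpr (by omega)) h
  rw [hlast]
  ring

lemma anti_even (n : ℕ) :
    ∑ ab ∈ Finset.HasAntidiagonal.antidiagonal (2 * n), ZL P Q ab.1 * ZL P Q ab.2
      = ∑ ij ∈ Finset.HasAntidiagonal.antidiagonal n, ZL P Q (2 * ij.1) * ZL P Q (2 * ij.2) := by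
  classical
  have hsub : (Finset.HasAntidiagonal.antidiagonal n).image (fun p : ℕ × ℕ => (2 * p.1, 2 * p.2))
      ⊆ Finset.HasAntidiagonal.antidiagonal (2 * n) := by
    intro ab hab
    rw [Finset.mem_image] at hab
    obtain ⟨p, hp, rfl⟩ := hab
    rw [Finset.HasAntidiagonal.mem_antidiagonal] at hp ⊢
    omega
  rw [← Finset.sum_subset hsub, Finset.sum_image]
  · rintro ⟨i, j⟩ hi ⟨k, l⟩ hk h
    simp only [Prod.mk.injEq] at h
    exact Prod.ext (by omega) (by omega)
  · rintro ⟨a, b⟩ hab hnot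
    rw [Finset.HasAntidiagonal.mem_antidiagonal] at hab
    by_cases he : Even a
    · exfalso
      obtain ⟨i, hi⟩ := he
      apply hnot
      rw [Finset.mem_image]
      refine ⟨(i, n - i), ?_, ?_⟩
      · rw [Finset.HasAntidiagonal.mem_antidiagonal]; omega
      · simp only [Prod.mk.injEq]; omega
    · rw [ZL_odd P Q a he, zero_mul]

lemma Zn_zero : Zn P Q 0 = 1 := by
  rw [Zn_eq_ZL]
  simpa using ZL_zero P Q

lemma Zn_rec (n : ℕ) :
    Zn P Q (n + 1) = (Q - P) * Zn P Q n
      + P * ∑ ij ∈ Finset.HasAntidiagonal.antidiagonal n, Zn P Q ij.1 * Zn P Q ij.2 := by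
  have h2 : 2 * (n + 1) = 2 * n + 2 := by ring
  rw [Zn_eq_ZL, h2, ZL_rec2, anti_even]
  simp only [Zn_eq_ZL]

end Final

/-- the generating function `Z(z) = Σ Z_n z^n` satisfies
`zP·Z² - (1 - z(Q-P))·Z + 1 = 0`. -/
theorem stmt1 {R : Type*} [CommRing R] (P Q : R) :
    X * C P * (PowerSeries.mk (Zn P Q)) ^ 2
      - (1 - X * (C Q - C P)) * (PowerSeries.mk (Zn P Q)) + 1 = 0 := by
  set Z : PowerSeries R := PowerSeries.mk (Zn P Q) with hZ
  have H : Z = 1 + X * ((C Q - C P) * Z) + X * (C P * Z ^ 2) := by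
    ext n
    rcases n with _ | k
    · simp [hZ, Zn_zero]
    · rw [hZ, coeff_mk, map_add, map_add, coeff_succ_X_mul, coeff_succ_X_mul]
      rw [sub_mul, map_sub, coeff_C_mul, coeff_C_mul, coeff_mk, coeff_C_mul, sq,
        coeff_mul]
      simp only [coeff_mk]
      rw [Zn_rec]
      have hk : (coeff (k + 1)) (1 : PowerSeries R) = 0 := by
        rw [coeff_one, if_neg (by omega)]
      rw [hk]
      ring
  linear_combination -H
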